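/- Let F = {0 (constant), big (constant), s (arity 1), inf (arity 1), cons (arity 2)} and let R be the rewrite system {cons(x, cons(y,z)) → big, inf(x) → cons(x, inf(s(x)))}. Then every ground term of T(F) outermost terminates, i.e., there is no infinite sequence of outermost rewrite steps starting from any ground term. -/

import Mathlib

namespace TRS

inductive Term (F V : Type*) where
  | var : V → Term F V
  | app : F → List (Term F V) → Term F V

namespace Term

variable {F V : Type*}

mutual
  def subst (σ : V → Term F V) : Term F V → Term F V
    | .var x => σ x
    | .app f ts => .app f (substList σ ts)

  def substList (σ : V → Term F V) : List (Term F V) → List (Term F V)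
    | [] => []
    | t :: ts => subst σ t :: substList σ ts
end

mutual
  def vars : Term F V → Set V
    | .var x => {x}
    | .app _ ts => varsList ts

  def varsList : List (Term F V) → Set V
    | [] => ∅
    | t :: ts => vars t ∪ varsList ts
end

def IsGround (t : Term F V) : Prop := vars t = ∅

def top : Term F V → Option F
  | .var _ => none
  | .app f _ => some f

def subtermAt : List ℕ → Term F V → Option (Term F V)
  | [], t => some t
  | _ :: _, .var _ => none
  | i :: p, .app _ ts =>
    match ts[i]? with
    | none => none
    | some u => subtermAt p u

def replaceAt : List ℕ → Term F V → Term F V → Option (Term F V)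
  | [], _, u => some u
  | _ :: _, .var _, _ => none
  | i :: p, .app f ts, u =>
    match ts[i]? with
    | none => none
    | some ti =>
      match replaceAt p ti u with
      | none => none
      | some ti' => some (.app f (ts.set i ti'))

inductive WF (arity : F → ℕ) : Term F V → Prop
  | var (x : V) : WF arity (.var x)
  | app (f : F) (ts : List (Term F V)) :
      ts.length = arity f → (∀ t ∈ ts, WF arity t) → WF arity (.app f ts)

inductive Occurs (f : F) : Term F V → Prop
  | head (ts : List (Term F V)) : Occurs f (.app f ts)
  | arg {g : F} {ts : List (Term F V)} {t : Term F V} :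
      t ∈ ts → Occurs f t → Occurs f (.app g ts)

end Term

open Term

structure Rule (F V : Type*) where
  lhs : Term F V
  rhs : Term F V

variable {F V : Type*}

/-- The domain of a substitution. -/
def SDom (σ : V → Term F V) : Set V := {x | σ x ≠ Term.var x}

/-- The range (variables) of a substitution. -/
def SRan (σ : V → Term F V) : Set V := ⋃ x ∈ SDom σ, vars (σ x)

/-- A ground substitution maps every variable of its domain to a ground term. -/
def GroundSubst (σ : V → Term F V) : Prop := ∀ x ∈ SDom σ, IsGround (σ x)

/-- `R` is a rewrite system: no left-hand side is a variable, and
`Var(rhs) ⊆ Var(lhs)` for every rule. -/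
def IsRS (R : List (Rule F V)) : Prop :=
  ∀ ρ ∈ R, (∀ x : V, ρ.lhs ≠ Term.var x) ∧ vars ρ.rhs ⊆ vars ρ.lhs

/-- Rewriting at position `p` with the rule `l → r`. -/
def RewriteAtWith (l r : Term F V) (p : List ℕ) (s t : Term F V) : Prop :=
  ∃ τ : V → Term F V, subtermAt p s = some (subst τ l) ∧ replaceAt p s (subst τ r) = some t

/-- Rewriting at position `p` with some rule of `R`. -/
def RewriteAt (R : List (Rule F V)) (p : List ℕ) (s t : Term F V) : Prop :=
  ∃ ρ ∈ R, RewriteAtWith ρ.lhs ρ.rhs p s t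

/-- The rewriting relation induced by `R`. -/
def Rewrite (R : List (Rule F V)) (s t : Term F V) : Prop :=
  ∃ p, RewriteAt R p s t

def ReducibleAt (R : List (Rule F V)) (s : Term F V) (p : List ℕ) : Prop :=
  ∃ t, RewriteAt R p s t

def Reducible (R : List (Rule F V)) (s : Term F V) : Prop :=
  ∃ t, Rewrite R s t

def NormalForm (R : List (Rule F V)) (s : Term F V) : Prop := ¬ Reducible R s

/-- `n` is a normal form of `s`. -/
def IsNormalFormOf (R : List (Rule F V)) (s n : Term F V) : Prop :=
  Relation.ReflTransGen (Rewrite R) s n ∧ NormalForm R n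

/-- `q` is strictly below `p` (`p` is a strict prefix of `q`). -/
def StrictBelow (p q : List ℕ) : Prop := p <+: q ∧ p ≠ q

/-- Innermost rewrite step at position `p`. -/
def InnAt (R : List (Rule F V)) (p : List ℕ) (s t : Term F V) : Prop :=
  RewriteAt R p s t ∧ ∀ q, StrictBelow p q → ¬ ReducibleAt R s q

def InnStep (R : List (Rule F V)) (s t : Term F V) : Prop := ∃ p, InnAt R p s t

/-- Outermost rewrite step at position `p`. -/
def OutAt (R : List (Rule F V)) (p : List ℕ) (s t : Term F V) : Prop :=
  RewriteAt R p s t ∧ ∀ q, StrictBelow q p → ¬ ReducibleAt R s q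

def OutStep (R : List (Rule F V)) (s t : Term F V) : Prop := ∃ p, OutAt R p s t

/-- Innermost rewrite step at position `p` with rule `l → r`. -/
def InnAtWith (R : List (Rule F V)) (l r : Term F V) (p : List ℕ) (s t : Term F V) : Prop :=
  RewriteAtWith l r p s t ∧ ∀ q, StrictBelow p q → ¬ ReducibleAt R s q

/-- Outermost rewrite step at position `p` with rule `l → r`. -/
def OutAtWith (R : List (Rule F V)) (l r : Term F V) (p : List ℕ) (s t : Term F V) : Prop :=
  RewriteAtWith l r p s t ∧ ∀ q, StrictBelow q p → ¬ ReducibleAt R s q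

/-- No infinite innermost derivation starts from `t`. -/
def InnTerminates (R : List (Rule F V)) (t : Term F V) : Prop :=
  ¬ ∃ f : ℕ → Term F V, f 0 = t ∧ ∀ n, InnStep R (f n) (f (n + 1))

/-- No infinite outermost derivation starts from `t`. -/
def OutTerminates (R : List (Rule F V)) (t : Term F V) : Prop :=
  ¬ ∃ f : ℕ → Term F V, f 0 = t ∧ ∀ n, OutStep R (f n) (f (n + 1))

def Unifies (σ : V → Term F V) (u v : Term F V) : Prop := subst σ u = subst σ v

/-- `σ` is a most general unifier of `u` and `v`. -/
def IsMGU (u v : Term F V) (σ : V → Term F V) : Prop :=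
  Unifies σ u v ∧
    ∀ τ : V → Term F V, Unifies τ u v → ∃ ρ : V → Term F V, ∀ x, subst ρ (σ x) = τ x

/-- The usable rules of a term (least set closed under the defining equations). -/
inductive Usable (R : List (Rule F V)) (XA : Set V) : Term F V → Rule F V → Prop
  | var {x : V} {ρ : Rule F V} : x ∉ XA → ρ ∈ R → Usable R XA (Term.var x) ρ
  | rls {f : F} {ts : List (Term F V)} {ρ : Rule F V} :
      ρ ∈ R → Term.top ρ.lhs = some f → Usable R XA (Term.app f ts) ρ
  | arg {f : F} {ts : List (Term F V)} {t : Term F V} {ρ : Rule F V} :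
      t ∈ ts → Usable R XA t ρ → Usable R XA (Term.app f ts) ρ
  | rhs {f : F} {ts : List (Term F V)} {ρ' ρ : Rule F V} :
      ρ' ∈ R → Term.top ρ'.lhs = some f → Usable R XA ρ'.rhs ρ → Usable R XA (Term.app f ts) ρ

/-- The signature F = {0, big, s:1, inf:1, cons:2}. -/
inductive F17 : Type
  | zero | big | s | inf | cons

def arity17 : F17 → ℕ
  | .zero => 0
  | .big => 0
  | .s => 1
  | .inf => 1
  | .cons => 2

/-- The system {cons(x, cons(y,z)) → big, inf(x) → cons(x, inf(s(x)))}. -/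
def R17 : List (Rule F17 ℕ) :=
  [ ⟨.app .cons [.var 0, .app .cons [.var 1, .var 2]], .app .big []⟩,
    ⟨.app .inf [.var 0], .app .cons [.var 0, .app .inf [.app .s [.var 0]]]⟩ ]

set_option linter.unusedVariables false

open Term

def mu : Term F17 ℕ → ℕ
  | .var _ => 0
  | .app .zero _ => 0
  | .app .big _ => 0
  | .app .s [] => 0
  | .app .s (u :: _) => mu u
  | .app .inf [] => 3
  | .app .inf (u :: _) => mu u + 3
  | .app .cons [a, .app .cons _] => 1
  | .app .cons [a, .app .inf _] => mu a + 2
  | .app .cons [a, b] => mu a + mu b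
  | .app .cons _ => 0

lemma subtermAt_cons_eq (i : ℕ) (p : List ℕ) (f : F17) (ts : List (Term F17 ℕ)) :
    Term.subtermAt (i :: p) (Term.app f ts) = ts[i]?.bind (Term.subtermAt p) := by
  simp only [Term.subtermAt]
  cases h : ts[i]? <;> simp

lemma replaceAt_cons_eq (i : ℕ) (p : List ℕ) (f : F17) (ts : List (Term F17 ℕ))
    (u : Term F17 ℕ) :
    Term.replaceAt (i :: p) (Term.app f ts) u =
      ts[i]?.bind (fun ti => (Term.replaceAt p ti u).map
        (fun ti' => Term.app f (ts.set i ti'))) := by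
  simp only [Term.replaceAt]
  cases h : ts[i]? with
  | none => simp
  | some ti => cases h2 : Term.replaceAt p ti u <;> simp [h2]

lemma replaceAt_of_subtermAt :
    ∀ (p : List ℕ) (s w : Term F17 ℕ), subtermAt p s = some w →
      ∀ v, ∃ t', replaceAt p s v = some t' := by
  intro p
  induction p with
  | nil => intro s w h v; exact ⟨v, rfl⟩
  | cons i q ih =>
    intro s w h v
    cases s with
    | var x => simp [subtermAt] at h
    | app f ts =>
      rw [subtermAt_cons_eq] at h
      rw [replaceAt_cons_eq]
      simp only [Option.bind_eq_some_iff] at h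
      obtain ⟨ti, hi, hq⟩ := h
      obtain ⟨ti', hti'⟩ := ih ti w hq v
      exact ⟨Term.app f (ts.set i ti'), by simp [hi, hti']⟩

lemma reducibleAt_lift {f : F17} {ts : List (Term F17 ℕ)} {i : ℕ} {q : List ℕ}
    {ti : Term F17 ℕ} (hi : ts[i]? = some ti) (h : ReducibleAt R17 ti q) :
    ReducibleAt R17 (Term.app f ts) (i :: q) := by
  obtain ⟨u, ρ, hρ, τ, hsub, hrep⟩ := h
  refine ⟨Term.app f (ts.set i u), ρ, hρ, τ, ?_, ?_⟩
  · rw [subtermAt_cons_eq]; simp [hi, hsub]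
  · rw [replaceAt_cons_eq]; simp [hi, hrep]

lemma red_inf (u : Term F17 ℕ) : ReducibleAt R17 (Term.app .inf [u]) [] := by
  refine ⟨_, ⟨.app .inf [.var 0], .app .cons [.var 0, .app .inf [.app .s [.var 0]]]⟩,
    by simp [R17], fun _ => u, ?_, rfl⟩
  simp [subtermAt, Term.subst, Term.substList]

lemma red_cons (a b1 b2 : Term F17 ℕ) :
    ReducibleAt R17 (Term.app .cons [a, Term.app .cons [b1, b2]]) [] := by
  refine ⟨_, ⟨.app .cons [.var 0, .app .cons [.var 1, .var 2]], .app .big []⟩,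
    by simp [R17], fun n => match n with | 0 => a | 1 => b1 | _ => b2, ?_, rfl⟩
  simp [subtermAt, Term.subst, Term.substList]

lemma wf_subtermAt : ∀ (p : List ℕ) (t u : Term F17 ℕ), WF arity17 t →
    subtermAt p t = some u → WF arity17 u := by
  intro p
  induction p with
  | nil =>
    intro t u h hs
    rw [show subtermAt [] t = some t from rfl] at hs
    injection hs with hs; subst hs; exact h
  | cons i q ih =>
    intro t u h hs
    cases t with
    | var x => simp [subtermAt] at hs
    | app f ts =>
      rw [subtermAt_cons_eq] at hs
      simp only [Option.bind_eq_some_iff] at hs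
      obtain ⟨ti, hi, hq⟩ := hs
      cases h with
      | app _ _ hlen hall => exact ih ti u (hall ti (List.mem_of_getElem? hi)) hq

lemma wf_replaceAt : ∀ (p : List ℕ) (t u t' : Term F17 ℕ), WF arity17 t → WF arity17 u →
    replaceAt p t u = some t' → WF arity17 t' := by
  intro p
  induction p with
  | nil =>
    intro t u t' ht hu h
    rw [show replaceAt [] t u = some u from rfl] at h
    injection h with h; subst h; exact hu
  | cons i q ih =>
    intro t u t' ht hu h
    cases t with
    | var x => simp [replaceAt] at h
    | app f ts =>
      rw [replaceAt_cons_eq] at h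
      simp only [Option.bind_eq_some_iff, Option.map_eq_some_iff] at h
      obtain ⟨ti, hi, ti', hq, rfl⟩ := h
      cases ht with
      | app _ _ hlen hall =>
        refine WF.app f _ (by simp [hlen]) ?_
        intro x hx
        rcases List.mem_or_eq_of_mem_set hx with hx | hx
        · exact hall x hx
        · rw [hx]; exact ih ti u ti' (hall ti (List.mem_of_getElem? hi)) hu hq

lemma wf_rhs {ρ : Rule F17 ℕ} (hρ : ρ ∈ R17) (τ : ℕ → Term F17 ℕ)
    (h : WF arity17 (subst τ ρ.lhs)) : WF arity17 (subst τ ρ.rhs) := by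
  simp [R17] at hρ
  rcases hρ with rfl | rfl
  · simp only [Term.subst, Term.substList]
    exact WF.app _ [] rfl (by intro t ht; simp at ht)
  · simp only [Term.subst, Term.substList] at h ⊢
    have hτ0 : WF arity17 (τ 0) := by
      cases h with
      | app _ _ hlen hall => exact hall _ (by simp)
    refine WF.app _ _ rfl ?_
    intro t ht
    simp at ht
    rcases ht with rfl | rfl
    · exact hτ0
    · refine WF.app _ _ rfl ?_
      intro t ht; simp at ht; subst ht
      refine WF.app _ _ rfl ?_
      intro t ht; simp at ht; subst ht; exact hτ0

lemma wf_preserve {p : List ℕ} {t t' : Term F17 ℕ} (h : WF arity17 t)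
    (hr : RewriteAt R17 p t t') : WF arity17 t' := by
  obtain ⟨ρ, hρ, τ, hsub, hrep⟩ := hr
  exact wf_replaceAt p t _ t' h (wf_rhs hρ τ (wf_subtermAt p t _ h hsub)) hrep

lemma absurd_var_case (q : List ℕ) (ρ : Rule F17 ℕ) (hρ : ρ ∈ R17) (τ : ℕ → Term F17 ℕ)
    (v : ℕ) (h : subtermAt q (Term.var v) = some (subst τ ρ.lhs)) : False := by
  match q with
  | [] =>
    rw [show subtermAt [] (Term.var v : Term F17 ℕ) = some (Term.var v) from rfl] at h
    injection h with h
    simp [R17] at hρ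
    rcases hρ with rfl | rfl <;> simp [Term.subst, Term.substList] at h
  | j :: q' => simp [subtermAt] at h

lemma absurd_const_case (q : List ℕ) (ρ : Rule F17 ℕ) (hρ : ρ ∈ R17) (τ : ℕ → Term F17 ℕ)
    (c : F17) (bs : List (Term F17 ℕ)) (hbs : bs = [])
    (h : subtermAt q (Term.app c bs) = some (subst τ ρ.lhs)) : False := by
  subst hbs
  match q with
  | [] =>
    rw [show subtermAt [] (Term.app c [] : Term F17 ℕ) = some (Term.app c []) from rfl] at h
    injection h with h
    simp [R17] at hρ
    rcases hρ with rfl | rfl <;> simp [Term.subst, Term.substList] at h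
  | j :: q' =>
    rw [subtermAt_cons_eq] at h
    simp at h

lemma mu_decrease : ∀ (p : List ℕ) (t t' : Term F17 ℕ), WF arity17 t →
    OutAt R17 p t t' → mu t' < mu t := by
  intro p
  induction p with
  | nil =>
    rintro t t' hwf ⟨⟨ρ, hρ, τ, hsub, hrep⟩, hout⟩
    rw [show subtermAt [] t = some t from rfl] at hsub
    rw [show replaceAt [] t (subst τ ρ.rhs) = some (subst τ ρ.rhs) from rfl] at hrep
    injection hsub with hsub
    injection hrep with hrep
    subst hsub; subst hrep
    simp [R17] at hρ
    rcases hρ with rfl | rfl <;> simp [Term.subst, Term.substList, mu]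
  | cons i q ih =>
    rintro t t' hwf ⟨⟨ρ, hρ, τ, hsub, hrep⟩, hout⟩
    cases t with
    | var x => simp [subtermAt] at hsub
    | app f ts =>
      rw [subtermAt_cons_eq] at hsub
      rw [replaceAt_cons_eq] at hrep
      simp only [Option.bind_eq_some_iff, Option.map_eq_some_iff] at hsub hrep
      obtain ⟨ti, hi, hsubq⟩ := hsub
      obtain ⟨ti2, hi2, ti', hrepq, ht'⟩ := hrep
      rw [hi] at hi2; injection hi2 with hi2; subst hi2
      subst ht'
      have hroot : ¬ ReducibleAt R17 (Term.app f ts) [] :=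
        hout [] ⟨List.nil_prefix, by simp⟩
      have houtq : ∀ q', StrictBelow q' q → ¬ ReducibleAt R17 ti q' := by
        intro q' hq' hred
        refine hout (i :: q') ⟨?_, ?_⟩ (reducibleAt_lift hi hred)
        · exact List.cons_prefix_cons.mpr ⟨rfl, hq'.1⟩
        · intro h; injection h with _ h2; exact hq'.2 h2
      have hstep : OutAt R17 q ti ti' := ⟨⟨ρ, hρ, τ, hsubq, hrepq⟩, houtq⟩
      cases hwf with
      | app _ _ hlen hall =>
      have hwfti : WF arity17 ti := hall ti (List.mem_of_getElem? hi)
      have hdec : mu ti' < mu ti := ih ti ti' hwfti hstep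
      cases f with
      | zero =>
        obtain rfl : ts = [] := List.length_eq_zero_iff.mp (by simpa [arity17] using hlen)
        simp at hi
      | big =>
        obtain rfl : ts = [] := List.length_eq_zero_iff.mp (by simpa [arity17] using hlen)
        simp at hi
      | inf =>
        obtain ⟨u, rfl⟩ : ∃ u, ts = [u] :=
          List.length_eq_one_iff.mp (by simpa [arity17] using hlen)
        exact absurd (red_inf u) hroot
      | s =>
        obtain ⟨u, rfl⟩ : ∃ u, ts = [u] :=
          List.length_eq_one_iff.mp (by simpa [arity17] using hlen)
        cases i with
        | zero =>
          simp only [List.getElem?_cons_zero] at hi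
          injection hi with hi; subst hi
          simpa [mu] using hdec
        | succ j => simp at hi
      | cons =>
        obtain ⟨a, b, rfl⟩ : ∃ a b, ts = [a, b] :=
          List.length_eq_two.mp (by simpa [arity17] using hlen)
        -- rule out b being cons-headed
        have hbnotcons : ∀ bs, b = Term.app .cons bs → False := by
          rintro bs rfl
          have hwfb : WF arity17 (Term.app F17.cons bs) := hall _ (by simp)
          obtain ⟨b1, b2, rfl⟩ : ∃ b1 b2, bs = [b1, b2] := by
            cases hwfb with
            | app _ _ hlen2 _ => exact List.length_eq_two.mp (by simpa [arity17] using hlen2)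
          exact absurd (red_cons a b1 b2) hroot
        match i, hi with
        | 0, hi =>
          simp only [List.getElem?_cons_zero] at hi
          injection hi with hi; subst hi
          simp only [List.set]
          match b, hbnotcons with
          | Term.var v, _ => simpa [mu] using hdec
          | Term.app .zero bs, _ => simpa [mu] using hdec
          | Term.app .big bs, _ => simpa [mu] using hdec
          | Term.app .s bs, _ => simpa [mu] using hdec
          | Term.app .inf bs, _ => simpa [mu] using hdec
          | Term.app .cons bs, hbc => exact absurd rfl (hbc bs)
        | 1, hi =>
          simp only [List.getElem?_cons_succ, List.getElem?_cons_zero] at hi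
          injection hi with hi; subst hi
          simp only [List.set]
          match b, hwfti, hsubq, hrepq, hdec, hbnotcons, houtq with
          | Term.var v, _, hsubq, _, _, _, _ => exact (absurd_var_case q ρ hρ τ v hsubq).elim
          | Term.app .cons bs, _, _, _, _, hbc, _ => exact absurd rfl (hbc bs)
          | Term.app .zero bs, hwfb, hsubq, _, _, _, _ =>
            exact (absurd_const_case q ρ hρ τ .zero bs (by
              cases hwfb with | app _ _ h2 _ => exact List.length_eq_zero_iff.mp h2) hsubq).elim
          | Term.app .big bs, hwfb, hsubq, _, _, _, _ =>
            exact (absurd_const_case q ρ hρ τ .big bs (by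
              cases hwfb with | app _ _ h2 _ => exact List.length_eq_zero_iff.mp h2) hsubq).elim
          | Term.app .inf bs, hwfb, hsubq, hrepq, _, _, houtq =>
            obtain ⟨u, rfl⟩ : ∃ u, bs = [u] := by
              cases hwfb with
              | app _ _ h2 _ => exact List.length_eq_one_iff.mp (by simpa [arity17] using h2)
            match q, hsubq, hrepq, houtq with
            | j :: q'', _, _, houtq =>
              exact absurd (red_inf u) (houtq [] ⟨List.nil_prefix, by simp⟩)
            | [], hsubq, hrepq, _ =>
              rw [show subtermAt [] (Term.app F17.inf [u]) = some (Term.app F17.inf [u])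
                from rfl] at hsubq
              injection hsubq with hsubq
              rw [show replaceAt [] (Term.app F17.inf [u]) (subst τ ρ.rhs) =
                some (subst τ ρ.rhs) from rfl] at hrepq
              injection hrepq with hrepq
              subst hrepq
              simp [R17] at hρ
              rcases hρ with rfl | rfl
              · simp [Term.subst, Term.substList] at hsubq
              · simp only [Term.subst, Term.substList, mu]
                omega
          | Term.app .s bs, hwfb, hsubq, hrepq, hdec, _, _ =>
            obtain ⟨u, rfl⟩ : ∃ u, bs = [u] := by
              cases hwfb with
              | app _ _ h2 _ => exact List.length_eq_one_iff.mp (by simpa [arity17] using h2)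
            match q, hsubq, hrepq, hdec with
            | [], hsubq, _, _ =>
              rw [show subtermAt [] (Term.app F17.s [u]) = some (Term.app F17.s [u])
                from rfl] at hsubq
              injection hsubq with hsubq
              simp [R17] at hρ
              rcases hρ with rfl | rfl <;> simp [Term.subst, Term.substList] at hsubq
            | j :: q'', _, hrepq, hdec =>
              rw [replaceAt_cons_eq] at hrepq
              simp only [Option.bind_eq_some_iff, Option.map_eq_some_iff] at hrepq
              obtain ⟨w, hw, w', hw', rfl⟩ := hrepq
              match j, hw with
              | 0, hw =>
                simp only [List.getElem?_cons_zero] at hw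
                injection hw with hw; subst hw
                simp only [List.set]
                simp only [List.set, mu] at hdec ⊢
                omega
        | (j+2), hi => simp at hi

/-- every ground term of T(F) outermost terminates for R17. -/
theorem R17_outermost_terminating :
    ∀ t : Term F17 ℕ, IsGround t → Term.WF arity17 t → OutTerminates R17 t := by
  intro t _ hwf h
  obtain ⟨f, hf0, hstep⟩ := h
  have key : ∀ n, WF arity17 (f n) := by
    intro n
    induction n with
    | zero => rwa [hf0]
    | succ n ihn =>
      obtain ⟨p, hout⟩ := hstep n
      exact wf_preserve ihn hout.1
  have hdec : ∀ n, mu (f (n + 1)) < mu (f n) := by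
    intro n
    obtain ⟨p, hout⟩ := hstep n
    exact mu_decrease p _ _ (key n) hout
  have hb : ∀ n, mu (f n) + n ≤ mu (f 0) := by
    intro n
    induction n with
    | zero => simp
    | succ n ihn => have := hdec n; omega
  have := hb (mu (f 0) + 1)
  omega

end TRS
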